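/- arXiv:1806.00856 — 3 statements merged into one kernel-verified Lean document; each statement's English description precedes it below -/
import Mathlib

section
/- Let k be a field of characteristic 3, let f = (x₁² + x₀x₂)·x₀·(x₁² + x₀x₂ + x₀²) ∈ k[x₀,x₁,x₂], and let fᵢ = ∂f/∂xᵢ. Then the syzygy module {(a,b,c) ∈ k[x₀,x₁,x₂]³ : a·f₀ + b·f₁ + c·f₂ = 0}, i.e., the kernel of the linear map k[x₀,x₁,x₂]³ → k[x₀,x₁,x₂] sending (a,b,c) to a·f₀ + b·f₁ + c·f₂, equals the submodule spanned by the two elements (0, x₀, x₁) and (x₀³ − x₀x₁² − x₀²x₂, x₁³, −x₀²x₂ − x₁²x₂). -/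
open MvPolynomial

lemma primeXmv (K : Type*) [Field K] (n : ℕ) (i : Fin (n+1)) :
    Prime (X i : MvPolynomial (Fin (n+1)) K) := by
  have h0 : Prime (X 0 : MvPolynomial (Fin (n+1)) K) := by
    rw [← MulEquiv.prime_iff (finSuccEquiv K n).toMulEquiv]
    simpa [finSuccEquiv_X_zero] using Polynomial.prime_X
  have := MulEquiv.prime_iff (renameEquiv K (Equiv.swap (0 : Fin (n+1)) i)).toMulEquiv
    (p := (X 0 : MvPolynomial (Fin (n+1)) K))
  rw [← this] at h0
  simpa [renameEquiv_apply, rename_X, Equiv.swap_apply_left] using h0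

lemma primew (K : Type*) [Field K] :
    Prime (X 1 ^ 2 + X 0 * X 2 - X 0 ^ 2 : MvPolynomial (Fin 3) K) := by
  rw [← MulEquiv.prime_iff (renameEquiv K (Equiv.swap (0 : Fin 3) 2)).toMulEquiv]
  have h1 : (renameEquiv K (Equiv.swap (0 : Fin 3) 2))
      (X 1 ^ 2 + X 0 * X 2 - X 0 ^ 2) = X 1 ^ 2 + X 2 * X 0 - X 2 ^ 2 := by
    simp only [renameEquiv_apply, map_add, map_sub, map_mul, map_pow, rename_X]
    norm_num [Equiv.swap_apply_def, Fin.ext_iff]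
  show Prime ((renameEquiv K (Equiv.swap (0:Fin 3) 2)) (X 1 ^ 2 + X 0 * X 2 - X 0 ^ 2))
  rw [h1, ← MulEquiv.prime_iff (finSuccEquiv K 2).toMulEquiv]
  show Prime ((finSuccEquiv K 2) (X 1 ^ 2 + X 2 * X 0 - X 2 ^ 2 : MvPolynomial (Fin 3) K))
  have h2 : (finSuccEquiv K 2) (X 1 ^ 2 + X 2 * X 0 - X 2 ^ 2 : MvPolynomial (Fin 3) K)
      = Polynomial.C (X 1) * Polynomial.X + Polynomial.C (X 0 ^ 2 - X 1 ^ 2) := by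
    have e1 : (X 1 : MvPolynomial (Fin 3) K) = X (Fin.succ 0) := rfl
    have e2 : (X 2 : MvPolynomial (Fin 3) K) = X (Fin.succ 1) := rfl
    rw [map_sub, map_add, map_mul, map_pow, map_pow, e1, e2, finSuccEquiv_X_zero,
      finSuccEquiv_X_succ, finSuccEquiv_X_succ, map_sub, map_pow, map_pow]
    ring
  rw [h2]
  set p : Polynomial (MvPolynomial (Fin 2) K) :=
    Polynomial.C (X 1) * Polynomial.X + Polynomial.C (X 0 ^ 2 - X 1 ^ 2) with hp
  have hX1 : Prime (X 1 : MvPolynomial (Fin 2) K) := primeXmv K 1 1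
  have hnd : ¬ (X 1 : MvPolynomial (Fin 2) K) ∣ X 0 := by
    intro h
    have := map_dvd (eval (fun i : Fin 2 => if i = 0 then (1 : K) else 0)) h
    simp at this
  have hprim : p.IsPrimitive := by
    intro r hr
    have hco1 : p.coeff 1 = X 1 := by
      rw [hp, Polynomial.coeff_add, Polynomial.coeff_C_mul, Polynomial.coeff_X_one,
        Polynomial.coeff_C]
      simp
    have hco0 : p.coeff 0 = X 0 ^ 2 - X 1 ^ 2 := by
      rw [hp, Polynomial.coeff_add, Polynomial.coeff_C_mul, Polynomial.coeff_X_zero,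
        Polynomial.coeff_C]
      simp
    have hc1 : r ∣ X 1 := hco1 ▸ (Polynomial.C_dvd_iff_dvd_coeff r p).mp hr 1
    have hc0 : r ∣ X 0 ^ 2 - X 1 ^ 2 := hco0 ▸ (Polynomial.C_dvd_iff_dvd_coeff r p).mp hr 0
    obtain ⟨s, hs⟩ := hc1
    rcases hX1.irreducible.isUnit_or_isUnit hs with h | h
    · exact h
    · exfalso
      obtain ⟨u, hu⟩ := isUnit_iff_exists_inv.mp h
      have hX1r : (X 1 : MvPolynomial (Fin 2) K) ∣ r :=
        ⟨u, by rw [hs, mul_assoc, hu, mul_one]⟩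
      have : (X 1 : MvPolynomial (Fin 2) K) ∣ X 0 ^ 2 := by
        have h1 := hX1r.trans hc0
        have h2 : (X 1 : MvPolynomial (Fin 2) K) ∣ X 1 ^ 2 := dvd_pow_self _ (by norm_num)
        calc (X 1 : MvPolynomial (Fin 2) K) ∣ (X 0 ^2 - X 1 ^2) + X 1 ^2 := dvd_add h1 h2
          _ = X 0 ^ 2 := by ring
      exact hnd (hX1.dvd_of_dvd_pow this)
  have hinj := IsFractionRing.injective (MvPolynomial (Fin 2) K)
      (FractionRing (MvPolynomial (Fin 2) K))
  have hdeg : p.degree = 1 :=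
    Polynomial.degree_linear (MvPolynomial.X_ne_zero 1)
  have hirr : Irreducible (p.map (algebraMap (MvPolynomial (Fin 2) K)
      (FractionRing (MvPolynomial (Fin 2) K)))) := by
    apply Polynomial.irreducible_of_degree_eq_one
    rwa [Polynomial.degree_map_eq_of_injective hinj]
  exact (UniqueFactorizationMonoid.irreducible_iff_prime.mp
    (hprim.irreducible_of_irreducible_map_of_injective hinj hirr))

/-- In characteristic 3, the syzygy module of the partial derivatives of
`f = (x₁² + x₀x₂)·x₀·(x₁² + x₀x₂ + x₀²)`, i.e. the kernel of
`(a,b,c) ↦ a·f₀ + b·f₁ + c·f₂`, is spanned by `(0, x₀, x₁)` and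
`(x₀³ - x₀x₁² - x₀²x₂, x₁³, -x₀²x₂ - x₁²x₂)`. -/
theorem stmt5 (k : Type*) [Field k] [CharP k 3]
    (f : MvPolynomial (Fin 3) k)
    (hf : f = (X 1 ^ 2 + X 0 * X 2) * X 0 * (X 1 ^ 2 + X 0 * X 2 + X 0 ^ 2))
    (f' : Fin 3 → MvPolynomial (Fin 3) k)
    (hf' : ∀ i, f' i = pderiv i f) :
    LinearMap.ker
        (Fintype.linearCombination (MvPolynomial (Fin 3) k) f')
      = Submodule.span (MvPolynomial (Fin 3) k)
          {![0, X 0, X 1],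
           ![X 0 ^ 3 - X 0 * X 1 ^ 2 - X 0 ^ 2 * X 2, X 1 ^ 3,
             -(X 0 ^ 2 * X 2) - X 1 ^ 2 * X 2]} := by
  have hk : (3:k) = 0 := by exact_mod_cast CharP.cast_eq_zero k 3
  have h3 : (3 : MvPolynomial (Fin 3) k) = 0 := by
    rw [← map_ofNat (C : k →+* MvPolynomial (Fin 3) k) 3, hk, map_zero]
  have hf0 : f' 0 = X 1^4 + X 0 * X 1^2 * X 2 + X 0^3 * X 2 := by
    rw [hf' 0, hf]
    simp [pderiv_mul, pderiv_X_self, pderiv_X_of_ne]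
    linear_combination (X 1^2*X 0*X 2 + X 1^2*X 0^2 + X 0^2*X 2^2 + X 0^3*X 2) * h3
  have hf1 : f' 1 = X 0 * X 1 * (X 1^2 + X 0*X 2 - X 0^2) := by
    rw [hf' 1, hf]
    simp [pderiv_mul, pderiv_X_self, pderiv_X_of_ne]
    linear_combination (X 0*X 1^3 + X 0^2*X 1*X 2 + X 0^3*X 1) * h3
  have hf2 : f' 2 = -(X 0^2) * (X 1^2 + X 0*X 2 - X 0^2) := by
    rw [hf' 2, hf]
    simp [pderiv_mul, pderiv_X_self, pderiv_X_of_ne]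
    linear_combination (X 0^2*X 1^2 + X 0^3*X 2) * h3
  have hwp : Prime (X 1 ^ 2 + X 0 * X 2 - X 0 ^ 2 : MvPolynomial (Fin 3) k) := primew k
  have hx0 : Prime (X 0 : MvPolynomial (Fin 3) k) := primeXmv k 2 0
  have nd1 : ¬ (X 0 : MvPolynomial (Fin 3) k) ∣
      X 1^4 + X 0 * X 1^2 * X 2 + X 0^3 * X 2 := by
    intro h
    have := map_dvd (eval (fun i : Fin 3 => if i = 1 then (1:k) else 0)) h
    simp at this
  have nd2 : ¬ (X 1 ^ 2 + X 0 * X 2 - X 0 ^ 2 : MvPolynomial (Fin 3) k) ∣ X 0 ^ 4 := by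
    intro h
    have := map_dvd (eval (fun i : Fin 3 => if i = 1 then (0:k) else 1)) h
    simp at this
  have nd3 : ¬ (X 0 : MvPolynomial (Fin 3) k) ∣ X 1 := by
    intro h
    have := map_dvd (eval (fun i : Fin 3 => if i = 1 then (1:k) else 0)) h
    simp at this
  apply le_antisymm
  · -- ker ≤ span
    intro v hv
    rw [LinearMap.mem_ker, Fintype.linearCombination_apply, Fin.sum_univ_three] at hv
    simp only [smul_eq_mul, hf0, hf1, hf2] at hv
    have hdv0 : (X 0  : MvPolynomial (Fin 3) k) ∣ v 0 * (X 1^4 + X 0 * X 1^2 * X 2 + X 0^3 * X 2) :=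
      ⟨(X 1^2 + X 0*X 2 - X 0^2) * (X 0 * v 2 - X 1 * v 1), by linear_combination hv⟩
    have h1 : (X 0 : MvPolynomial (Fin 3) k) ∣ v 0 := (hx0.2.2 _ _ hdv0).resolve_right nd1
    obtain ⟨a1, ha1⟩ := h1
    have h2 : a1 * (X 1^4 + X 0 * X 1^2 * X 2 + X 0^3 * X 2)
        = (X 1^2 + X 0*X 2 - X 0^2) * (X 0 * v 2 - X 1 * v 1) := by
      apply mul_left_cancel₀ (X_ne_zero (R := k) 0)
      linear_combination hv - (X 1^4 + X 0 * X 1^2 * X 2 + X 0^3 * X 2) * ha1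
    have h4 : a1 * X 0^4 = (X 1^2 + X 0*X 2 - X 0^2) *
        ((X 0 * v 2 - X 1 * v 1) - a1 * ((X 1^2 + X 0*X 2 - X 0^2) + 2*X 0^2 + 2*(X 0*X 2))) := by
      linear_combination h2 + a1*(X 0*X 1^2*X 2 + X 0^2*X 2^2 - X 0^3*X 2)*h3
    have hWa1 : (X 1^2 + X 0*X 2 - X 0^2 : MvPolynomial (Fin 3) k) ∣ a1 :=
      (hwp.2.2 _ _ ⟨_, h4⟩).resolve_right nd2
    obtain ⟨s, hs⟩ := hWa1
    have h5 : s * (X 1^4 + X 0 * X 1^2 * X 2 + X 0^3 * X 2) = X 0 * v 2 - X 1 * v 1 := by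
      apply mul_left_cancel₀ hwp.ne_zero
      linear_combination h2 - (X 1^4 + X 0 * X 1^2 * X 2 + X 0^3 * X 2) * hs
    have h6 : X 1 * (v 1 + s * X 1^3)
        = X 0 * (v 2 - s*(X 1^2*X 2) - s*(X 0^2*X 2)) := by
      linear_combination h5
    have hdt : (X 0 : MvPolynomial (Fin 3) k) ∣ v 1 + s * X 1^3 :=
      ((hx0.2.2 _ _ ⟨_, h6⟩).resolve_left nd3)
    obtain ⟨t, ht⟩ := hdt
    have h7 : X 1 * t = v 2 - s*(X 1^2*X 2) - s*(X 0^2*X 2) := by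
      apply mul_left_cancel₀ (X_ne_zero (R := k) 0)
      linear_combination h6 - X 1 * ht
    rw [Submodule.mem_span_pair]
    refine ⟨t, -s, ?_⟩
    funext i
    fin_cases i
    · show t * 0 + -s * (X 0 ^ 3 - X 0 * X 1 ^ 2 - X 0 ^ 2 * X 2) = v 0
      linear_combination -ha1 - X 0 * hs
    · show t * X 0 + -s * X 1 ^ 3 = v 1
      linear_combination -ht
    · show t * X 1 + -s * (-(X 0 ^ 2 * X 2) - X 1 ^ 2 * X 2) = v 2
      linear_combination h7
  · -- span ≤ ker
    rw [Submodule.span_le]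
    rintro x hx
    simp only [Set.mem_insert_iff, Set.mem_singleton_iff] at hx
    have key : ∀ a b c : MvPolynomial (Fin 3) k,
        a * f' 0 + b * f' 1 + c * f' 2 = 0 →
        (![a, b, c] : Fin 3 → MvPolynomial (Fin 3) k) ∈
          LinearMap.ker (Fintype.linearCombination (MvPolynomial (Fin 3) k)
            f') := by
      intro a b c h
      rw [LinearMap.mem_ker, Fintype.linearCombination_apply, Fin.sum_univ_three]
      simpa using h
    rcases hx with rfl | rfl
    · exact key _ _ _ (by rw [hf0, hf1, hf2]; ring)
    · exact key _ _ _ (by rw [hf0, hf1, hf2]; ring)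
end

section
/- Let k be a field, n ≥ 1, and let f ∈ k[x₀,…,x_n] be homogeneous of degree d with d ≠ 0 in k (char k does not divide d). Write fᵢ = ∂f/∂xᵢ and let g_♭ ∈ k[x₁,…,x_n] denote the dehomogenization of g at x₀ = 1. Then the ideals ((f₀)_♭, (f₁)_♭, …, (f_n)_♭) and (f_♭, ∂f_♭/∂x₁, …, ∂f_♭/∂x_n) of k[x₁,…,x_n] are equal. -/
open MvPolynomial

lemma pderiv_aeval_eq {R : Type*} [CommSemiring R] {m n : ℕ}
    (g : Fin m → MvPolynomial (Fin n) R) (p : MvPolynomial (Fin m) R) (i : Fin n) :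
    pderiv i (aeval g p) = ∑ j, aeval g (pderiv j p) * pderiv i (g j) := by
  induction p using MvPolynomial.induction_on with
  | C a => simp
  | add p q hp hq =>
    rw [map_add, map_add, hp, hq, ← Finset.sum_add_distrib]
    exact Finset.sum_congr rfl fun l _ => by simp [add_mul]
  | mul_X p j hp =>
    rw [map_mul, aeval_X, pderiv_mul, hp]
    have key : ∀ l : Fin m, aeval g (pderiv l (p * X j)) * pderiv i (g l)
        = aeval g (pderiv l p) * pderiv i (g l) * g j
          + (if l = j then aeval g p * pderiv i (g j) else 0) := by
      intro l
      rw [pderiv_mul]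
      by_cases h : l = j
      · subst h; rw [pderiv_X_self, if_pos rfl]
        simp only [map_add, map_mul, map_one, aeval_X, mul_one]; ring
      · rw [pderiv_X_of_ne (Ne.symm h), if_neg h]
        simp only [map_mul, map_add, map_zero, mul_zero, add_zero, aeval_X]; ring
    rw [Finset.sum_congr rfl fun l _ => key l, Finset.sum_add_distrib,
      Finset.sum_ite_eq' Finset.univ j, if_pos (Finset.mem_univ j), ← Finset.sum_mul]

lemma X_mul_pderiv_monomial {R : Type*} [CommSemiring R] {m : ℕ} (j : Fin m)
    (v : Fin m →₀ ℕ) (a : R) :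
    X j * pderiv j (monomial v a) = v j • monomial v a := by
  rw [pderiv_monomial, X, monomial_mul, one_mul]
  by_cases h : v j = 0
  · simp [h]
  · rw [add_tsub_cancel_of_le (by rwa [Finsupp.single_le_iff, Nat.one_le_iff_ne_zero])]
    rw [smul_monomial, nsmul_eq_mul, mul_comm]

/-- Euler's identity for homogeneous polynomials. -/
lemma euler {R : Type*} [CommSemiring R] {m d : ℕ}
    (f : MvPolynomial (Fin m) R) (hf : f.IsHomogeneous d) :
    ∑ j, X j * pderiv j f = d • f := by
  conv_lhs => rw [f.as_sum]
  conv_rhs => rw [f.as_sum]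
  rw [Finset.smul_sum,
    Finset.sum_congr rfl (fun j _ => by rw [map_sum, Finset.mul_sum]), Finset.sum_comm]
  refine Finset.sum_congr rfl fun v hv => ?_
  rw [Finset.sum_congr rfl fun j _ => X_mul_pderiv_monomial j v _, ← Finset.sum_smul]
  have hdeg := hf (mem_support_iff.mp hv)
  have : ∑ j, v j = d := by
    rw [← hdeg]
    simp [Finsupp.weight, Finsupp.linearCombination, Finsupp.sum_fintype]
  rw [this]

/-- Dehomogenization at `x₀ = 1`: the `k`-algebra map
`k[x₀,…,xₙ] → k[x₁,…,xₙ]` sending `x₀ ↦ 1` and `xᵢ ↦ xᵢ` for `1 ≤ i ≤ n`. -/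
noncomputable def dehom (k : Type*) [CommSemiring k] (n : ℕ) :
    MvPolynomial (Fin (n + 1)) k →ₐ[k] MvPolynomial (Fin n) k :=
  aeval (Fin.cases (1 : MvPolynomial (Fin n) k) X)

lemma pderiv_dehom {k : Type*} [CommSemiring k] {n : ℕ}
    (f : MvPolynomial (Fin (n + 1)) k) (i : Fin n) :
    pderiv i (dehom k n f) = dehom k n (pderiv i.succ f) := by
  simp only [dehom]
  rw [pderiv_aeval_eq, Fin.sum_univ_succ]
  simp [pderiv_X, Pi.single_apply]

lemma dehom_euler {k : Type*} [CommSemiring k] {n d : ℕ}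
    (f : MvPolynomial (Fin (n + 1)) k) (hf : f.IsHomogeneous d) :
    d • dehom k n f
      = dehom k n (pderiv 0 f) + ∑ l : Fin n, X l * dehom k n (pderiv l.succ f) := by
  have h := congrArg (dehom k n) (euler f hf)
  rw [map_nsmul] at h
  rw [← h, map_sum, Fin.sum_univ_succ]
  simp only [dehom, map_mul, aeval_X, Fin.cases_zero, Fin.cases_succ, one_mul]

/-- For `f` homogeneous of degree `d` with `d ≠ 0` in `k`, the dehomogenized
jacobian ideal `((f₀)♭, …, (fₙ)♭)` equals the Tjurina ideal
`(f♭, ∂f♭/∂x₁, …, ∂f♭/∂xₙ)` of the dehomogenization `f♭`. -/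
theorem stmt8 (k : Type*) [Field k] (n : ℕ) (hn : 1 ≤ n) (d : ℕ)
    (hd : (d : k) ≠ 0)
    (f : MvPolynomial (Fin (n + 1)) k) (hf : f.IsHomogeneous d) :
    Ideal.span (Set.range fun i : Fin (n + 1) => dehom k n (pderiv i f))
      = Ideal.span
          (insert (dehom k n f)
            (Set.range fun i : Fin n => pderiv i (dehom k n f))) := by
  have heuler := dehom_euler f hf
  apply le_antisymm
  · rw [Ideal.span_le]
    rintro _ ⟨i, rfl⟩
    simp only [SetLike.mem_coe]
    refine Fin.cases ?_ (fun l => ?_) i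
    · have : dehom k n (pderiv 0 f)
          = d • dehom k n f - ∑ l : Fin n, X l * dehom k n (pderiv l.succ f) := by
        rw [heuler]; ring
      rw [this]
      refine Ideal.sub_mem _ ?_ ?_
      · exact Submodule.smul_of_tower_mem _ d
          (Ideal.subset_span (Set.mem_insert _ _))
      · exact Ideal.sum_mem _ fun l _ => Ideal.mul_mem_left _ _
          (Ideal.subset_span (Set.mem_insert_of_mem _ ⟨l, (pderiv_dehom f l).symm ▸ rfl⟩))
    · exact Ideal.subset_span (Set.mem_insert_of_mem _ ⟨l, pderiv_dehom f l⟩)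
  · rw [Ideal.span_le]
    rintro x hx
    simp only [SetLike.mem_coe]
    rcases hx with rfl | ⟨l, rfl⟩
    · have hmem : d • dehom k n f ∈
          Ideal.span (Set.range fun i : Fin (n + 1) => dehom k n (pderiv i f)) := by
        rw [heuler]
        refine Ideal.add_mem _ (Ideal.subset_span ⟨0, rfl⟩)
          (Ideal.sum_mem _ fun l _ => Ideal.mul_mem_left _ _
            (Ideal.subset_span ⟨l.succ, rfl⟩))
      have : dehom k n f = C ((d : k)⁻¹) * (d • dehom k n f) := by
        rw [nsmul_eq_mul, ← mul_assoc]
        rw [show ((d : MvPolynomial (Fin n) k)) = C (d : k) from (map_natCast C d).symm]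
        rw [← C_mul, inv_mul_cancel₀ hd, C_1, one_mul]
      rw [this]
      exact Ideal.mul_mem_left _ _ hmem
    · exact Ideal.subset_span ⟨l.succ, (pderiv_dehom f l).symm⟩
end

section
/- Let k be a field of characteristic 101. Set φ₀ = x z², φ₁ = −49 y² z, φ₂ = 50 y³ and θ₀ = −37 x z², θ₁ = −3 y² z, θ₂ = y³ in k[x,y,z]. Then there exists a nonzero polynomial h ∈ k[x,y,z] such that θ₀(φ₀,φ₁,φ₂) = h·x, θ₁(φ₀,φ₁,φ₂) = h·y, and θ₂(φ₀,φ₁,φ₂) = h·z. (Hence the polar map (x : y : z) ↦ (xz² : −49y²z : 50y³) of the curve V(z⁵⁰(y³+x²z)⁵¹) in characteristic 101 is birational, with inverse (x : y : z) ↦ (−37xz² : −3y²z : y³).) -/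
open MvPolynomial

/-- In characteristic 101, the polar map `(x : y : z) ↦ (xz² : -49y²z : 50y³)` of
the curve `V(z⁵⁰(y³+x²z)⁵¹)` is birational with inverse
`(x : y : z) ↦ (-37xz² : -3y²z : y³)`: substituting `φ = (xz², -49y²z, 50y³)` into
`θ = (-37xz², -3y²z, y³)` yields a nonzero common polynomial multiple of
`(x, y, z)`.  (Here `x = X 0`, `y = X 1`, `z = X 2`.) -/
theorem stmt12 (k : Type*) [Field k] [CharP k 101]
    (φ θ : Fin 3 → MvPolynomial (Fin 3) k)
    (hφ0 : φ 0 = X 0 * X 2 ^ 2)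
    (hφ1 : φ 1 = -49 * X 1 ^ 2 * X 2)
    (hφ2 : φ 2 = 50 * X 1 ^ 3)
    (hθ0 : θ 0 = -37 * (X 0 * X 2 ^ 2))
    (hθ1 : θ 1 = -3 * (X 1 ^ 2 * X 2))
    (hθ2 : θ 2 = X 1 ^ 3) :
    ∃ h : MvPolynomial (Fin 3) k, h ≠ 0 ∧
      aeval φ (θ 0) = h * X 0 ∧
      aeval φ (θ 1) = h * X 1 ∧
      aeval φ (θ 2) = h * X 2 := by
  have h101 : (101 : MvPolynomial (Fin 3) k) = 0 := by
    have := CharP.cast_eq_zero (MvPolynomial (Fin 3) k) 101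
    exact_mod_cast this
  have h16 : (16 : MvPolynomial (Fin 3) k) ≠ 0 := by
    have := (CharP.cast_eq_zero_iff (MvPolynomial (Fin 3) k) 101 16).not.mpr (by decide)
    exact_mod_cast this
  refine ⟨16 * X 1 ^ 6 * X 2 ^ 2, ?_, ?_, ?_, ?_⟩
  · exact mul_ne_zero (mul_ne_zero h16 (pow_ne_zero _ (X_ne_zero 1))) (pow_ne_zero _ (X_ne_zero 2))
  · rw [hθ0]
    simp only [map_mul, map_pow, map_neg, map_ofNat, aeval_X, hφ0, hφ2]
    linear_combination (-916 * X 0 * X 1 ^ 6 * X 2 ^ 2 : MvPolynomial (Fin 3) k) * h101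
  · rw [hθ1]
    simp only [map_mul, map_pow, map_neg, map_ofNat, aeval_X, hφ1, hφ2]
    linear_combination (-3566 * X 1 ^ 7 * X 2 ^ 2 : MvPolynomial (Fin 3) k) * h101
  · rw [hθ2]
    simp only [map_mul, map_pow, map_neg, map_ofNat, aeval_X, hφ1]
    linear_combination (-1165 * X 1 ^ 6 * X 2 ^ 3 : MvPolynomial (Fin 3) k) * h101
end
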